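/- Let S1, S2 be Polish spaces, ν a Borel probability measure on S2, and μ a Borel probability measure on S1×S2 with second marginal ν. Then there exists a Borel measurable function G : S2×[0,1] → S1 such that if Y has distribution ν and ξ is uniformly distributed on [0,1] and independent of Y, then the pair (G(Y,ξ), Y) has distribution μ. -/

import Mathlib

open MeasureTheory ProbabilityTheory Set Filter
open scoped Topology

/-- Quantile function (generalized inverse of the cdf) of a measure on `ℝ`. -/
noncomputable def qtl (m : Measure ℝ) (u : ℝ) : ℝ := sInf {t | u ≤ cdf m t}

lemma qtl_le_iff (m : Measure ℝ) [IsProbabilityMeasure m] {u : ℝ} (h0 : 0 < u) (h1 : u < 1)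
    (t : ℝ) : qtl m u ≤ t ↔ u ≤ cdf m t := by
  have hmono : Monotone (cdf m) := monotone_cdf m
  set S := {s : ℝ | u ≤ cdf m s} with hS
  have hne : S.Nonempty := ((tendsto_cdf_atTop m).eventually_const_le h1).exists
  obtain ⟨s₀, hs₀⟩ := eventually_atBot.mp ((tendsto_cdf_atBot m).eventually_lt_const h0)
  have hbdd : BddBelow S :=
    ⟨s₀, fun s hsS => le_of_not_gt fun hlt => absurd hsS (not_le.mpr (hs₀ s hlt.le))⟩
  constructor
  · intro ht
    have key : u ≤ cdf m (sInf S) := by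
      have htd : Tendsto (cdf m) (𝓝[>] (sInf S)) (𝓝 (cdf m (sInf S))) :=
        ((cdf m).right_continuous (sInf S)).tendsto.mono_left (nhdsWithin_mono _ Ioi_subset_Ici_self)
      refine ge_of_tendsto htd ?_
      filter_upwards [self_mem_nhdsWithin] with x hx
      obtain ⟨s, hsS, hs⟩ := exists_lt_of_csInf_lt hne hx
      exact le_trans hsS (hmono hs.le)
    exact key.trans (hmono ht)
  · exact fun ht => csInf_le hbdd ht

noncomputable def qtl' (m : Measure ℝ) (u : ℝ) : ℝ :=
  if u ∈ Ioo (0:ℝ) 1 then qtl m u else 0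

instance : IsProbabilityMeasure (volume.restrict (Ioo (0:ℝ) 1)) :=
  ⟨by simp⟩

lemma map_qtl' (m : Measure ℝ) [IsProbabilityMeasure m] (hm : Measurable (qtl' m)) :
    (volume.restrict (Icc (0:ℝ) 1)).map (qtl' m) = m := by
  rw [← Measure.restrict_congr_set Ioo_ae_eq_Icc]
  haveI : IsProbabilityMeasure ((volume.restrict (Ioo (0:ℝ) 1)).map (qtl' m)) :=
    Measure.isProbabilityMeasure_map hm.aemeasurable
  refine Measure.ext_of_Iic _ _ fun t => ?_
  rw [Measure.map_apply hm measurableSet_Iic, Measure.restrict_apply (hm measurableSet_Iic)]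
  have hc0 : 0 ≤ cdf m t := cdf_nonneg m t
  have hc1 : cdf m t ≤ 1 := cdf_le_one m t
  have hset : qtl' m ⁻¹' Iic t ∩ Ioo 0 1 = Iic (cdf m t) ∩ Ioo 0 1 := by
    ext u
    simp only [mem_inter_iff, mem_preimage, mem_Iic, and_congr_left_iff]
    intro hu
    rw [qtl', if_pos hu]
    exact qtl_le_iff m hu.1 hu.2 t
  rw [hset, ← ofReal_cdf m t]
  rcases lt_or_eq_of_le hc1 with hlt | heq
  · have : Iic (cdf m t) ∩ Ioo 0 1 = Ioc 0 (cdf m t) := by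
      ext u
      simp only [mem_inter_iff, mem_Iic, mem_Ioo, mem_Ioc]
      exact ⟨fun h => ⟨h.2.1, h.1⟩, fun h => ⟨h.2, h.1, lt_of_le_of_lt h.2 hlt⟩⟩
    rw [this, Real.volume_Ioc, sub_zero]
  · have : Iic (cdf m t) ∩ Ioo 0 1 = Ioo 0 1 := by
      rw [← heq]
      exact inter_eq_self_of_subset_right fun u hu => hu.2.le
    rw [this, Real.volume_Ioo, ← heq]
    norm_num

theorem stmt1
    {S1 S2 : Type} [MeasurableSpace S1] [TopologicalSpace S1] [PolishSpace S1] [BorelSpace S1]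
    [MeasurableSpace S2] [TopologicalSpace S2] [PolishSpace S2] [BorelSpace S2]
    (ν : Measure S2) [IsProbabilityMeasure ν]
    (μ : Measure (S1 × S2)) [IsProbabilityMeasure μ]
    (hμ : μ.map Prod.snd = ν) :
    ∃ G : S2 × ℝ → S1, Measurable G ∧
      ∀ (Ω : Type) (mΩ : MeasurableSpace Ω) (P : Measure Ω), IsProbabilityMeasure P →
        ∀ (Y : Ω → S2) (ξ : Ω → ℝ), Measurable Y → Measurable ξ →
          P.map Y = ν → P.map ξ = volume.restrict (Set.Icc (0:ℝ) 1) →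
          IndepFun Y ξ P →
          P.map (fun ω => (G (Y ω, ξ ω), Y ω)) = μ := by
  -- S1 is nonempty
  have hne1 : Nonempty S1 := by
    by_contra h
    rw [not_nonempty_iff] at h
    have h1 : μ Set.univ = 1 := measure_univ
    rw [Set.univ_eq_empty_iff.mpr inferInstance, measure_empty] at h1
    exact zero_ne_one h1
  -- swapped measure and its disintegration
  set ρ : Measure (S2 × S1) := μ.map Prod.swap with hρdef
  haveI : IsProbabilityMeasure ρ := Measure.isProbabilityMeasure_map measurable_swap.aemeasurable
  have hfst : ρ.fst = ν := by
    rw [hρdef, Measure.fst, Measure.map_map measurable_fst measurable_swap]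
    exact hμ
  obtain ⟨κ, hκmarkov, hdis⟩ : ∃ κ : Kernel S2 S1, IsMarkovKernel κ ∧ ν ⊗ₘ κ = ρ :=
    ⟨ρ.condKernel, inferInstance, by rw [← hfst]; exact ρ.disintegrate ρ.condKernel⟩
  haveI := hκmarkov
  -- embedding of S1 into ℝ and a measurable retraction
  obtain ⟨e, he⟩ := exists_measurableEmbedding_real S1
  obtain ⟨r, hr, hre⟩ := he.exists_measurable_extend measurable_id (fun _ => hne1)
  have hprob : ∀ y, IsProbabilityMeasure ((κ y).map e) := fun y =>
    Measure.isProbabilityMeasure_map he.measurable.aemeasurable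
  -- the quantile map
  set g : S2 × ℝ → ℝ := fun p => qtl' ((κ p.1).map e) p.2 with hgdef
  have hcdfmeas : ∀ t, Measurable fun y => cdf ((κ y).map e) t := by
    intro t
    have h1 : ∀ y, cdf ((κ y).map e) t = (((κ y).map e) (Iic t)).toReal := fun y => by
      haveI := hprob y; rw [cdf_eq_real, measureReal_def]
    simp_rw [h1, Measure.map_apply he.measurable measurableSet_Iic]
    exact (Kernel.measurable_coe κ (he.measurable measurableSet_Iic)).ennreal_toReal
  have hg : Measurable g := by
    apply measurable_of_Iic
    intro t
    have hset : g ⁻¹' Iic t =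
        {p : S2 × ℝ | p.2 ∈ Ioo (0:ℝ) 1 ∧ p.2 ≤ cdf ((κ p.1).map e) t} ∪
        {p : S2 × ℝ | p.2 ∉ Ioo (0:ℝ) 1 ∧ (0:ℝ) ≤ t} := by
      ext p
      simp only [mem_preimage, mem_Iic, mem_union, mem_setOf_eq, hgdef, qtl']
      by_cases hp : p.2 ∈ Ioo (0:ℝ) 1
      · haveI := hprob p.1
        rw [if_pos hp]
        simp only [hp, not_true_eq_false, false_and, or_false, true_and]
        exact qtl_le_iff _ hp.1 hp.2 t
      · rw [if_neg hp]
        simp [hp]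
    rw [hset]
    refine MeasurableSet.union ?_ ?_
    · exact (measurable_snd measurableSet_Ioo).inter
        (measurableSet_le measurable_snd ((hcdfmeas t).comp measurable_fst))
    · exact ((measurable_snd measurableSet_Ioo).compl).inter
        (MeasurableSet.const _)
  set G : S2 × ℝ → S1 := fun p => r (g p) with hGdef
  have hG : Measurable G := hr.comp hg
  refine ⟨G, hG, ?_⟩
  -- per-y inverse transform sampling
  have hgy : ∀ y, Measurable fun u => g (y, u) :=
    fun y => hg.comp (measurable_const.prodMk measurable_id)
  have hmapy : ∀ y : S2, (volume.restrict (Icc (0:ℝ) 1)).map (fun u => G (y, u)) = κ y := by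
    intro y
    haveI := hprob y
    have hm : Measurable (qtl' ((κ y).map e)) := hgy y
    have h1 : (volume.restrict (Icc (0:ℝ) 1)).map (qtl' ((κ y).map e)) = (κ y).map e :=
      map_qtl' ((κ y).map e) hm
    have h2 : (fun u => G (y, u)) = r ∘ (qtl' ((κ y).map e)) := rfl
    rw [h2, ← Measure.map_map hr hm, h1, Measure.map_map hr he.measurable, hre,
      Measure.map_id]
  -- assembly
  intro Ω mΩ P hP Y ξ hY hξ hPY hPξ hindep
  haveI := hP
  have hpair : P.map (fun ω => (Y ω, ξ ω)) = ν.prod (volume.restrict (Icc (0:ℝ) 1)) := by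
    rw [← hPY, ← hPξ]
    exact (indepFun_iff_map_prod_eq_prod_map_map hY.aemeasurable hξ.aemeasurable).mp hindep
  set Φ : S2 × ℝ → S1 × S2 := fun p => (G p, p.1) with hΦdef
  have hΦ : Measurable Φ := hG.prodMk measurable_fst
  have hcomp : (fun ω => (G (Y ω, ξ ω), Y ω)) = Φ ∘ (fun ω => (Y ω, ξ ω)) := rfl
  rw [hcomp, ← Measure.map_map hΦ (hY.prodMk hξ), hpair]
  -- it remains: (ν.prod unif).map Φ = μ
  have hμswap : ρ.map Prod.swap = μ := by
    rw [hρdef, Measure.map_map measurable_swap measurable_swap]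
    simp [Prod.swap_swap_eq]
  ext s hs
  rw [Measure.map_apply hΦ hs, Measure.prod_apply (hΦ hs), ← hμswap,
    Measure.map_apply measurable_swap hs, ← hdis,
    Measure.compProd_apply (measurable_swap hs)]
  refine lintegral_congr fun y => ?_
  have hsec : MeasurableSet {x : S1 | (x, y) ∈ s} :=
    (measurable_id.prodMk measurable_const) hs
  have h1 : Prod.mk y ⁻¹' (Φ ⁻¹' s) = (fun u => G (y, u)) ⁻¹' {x : S1 | (x, y) ∈ s} := rfl
  have h2 : Prod.mk y ⁻¹' (Prod.swap ⁻¹' s) = {x : S1 | (x, y) ∈ s} := rfl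
  have hGy : Measurable fun u => G (y, u) := hG.comp (measurable_const.prodMk measurable_id)
  rw [h1, h2, ← hmapy y, Measure.map_apply hGy hsec]
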